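/- Let D₁ be an annotation domain that is a lattice and D₂ an annotation domain. For a finite set A ⊆ L₁ × L₂ and a pair (a, b) ∈ A with a = ⊥₁ or b = ⊥₂, removing (a,b) does not change the induced function: for all z ∈ L₁, Ā(z) = (A \ {(a,b)})‾(z). -/

import Mathlib

/-- An annotation domain: an idempotent commutative semiring
`(L, ⊕, ⊗, ⊥, ⊤)` in which `⊕` is `⊤`-annihilating. -/
structure AnnDom (L : Type*) where
  oplus : L → L → L
  otimes : L → L → L
  bot : L
  top : L
  oplus_idem : ∀ a, oplus a a = a
  oplus_comm : ∀ a b, oplus a b = oplus b a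
  oplus_assoc : ∀ a b c, oplus (oplus a b) c = oplus a (oplus b c)
  otimes_comm : ∀ a b, otimes a b = otimes b a
  otimes_assoc : ∀ a b c, otimes (otimes a b) c = otimes a (otimes b c)
  bot_oplus : ∀ a, oplus bot a = a
  top_otimes : ∀ a, otimes top a = a
  bot_otimes : ∀ a, otimes bot a = bot
  top_oplus : ∀ a, oplus top a = top
  otimes_distrib : ∀ a b c, otimes a (oplus b c) = oplus (otimes a b) (otimes a c)

/-- The induced order: `a ⪯ b` iff `a ⊕ b = b`. -/
def AnnDom.le {L : Type*} (D : AnnDom L) (a b : L) : Prop := D.oplus a b = b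


/-- The annotation domain is a lattice: `⊗` is the greatest lower bound of
the induced order `⪯`. -/
def AnnDom.IsLattice {L : Type*} (D : AnnDom L) : Prop :=
  ∀ a b c, (D.le c a ∧ D.le c b) ↔ D.le c (D.otimes a b)


open Classical in
/-- The join `⊕₁` of the first coordinates of the pairs in `J` (`⊥₁` if empty). -/
noncomputable def joinFst {L1 L2 : Type*} (D1 : AnnDom L1) (J : Finset (L1 × L2)) : L1 :=
  haveI : Std.Commutative D1.oplus := ⟨D1.oplus_comm⟩
  haveI : Std.Associative D1.oplus := ⟨D1.oplus_assoc⟩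
  J.fold D1.oplus D1.bot Prod.fst

open Classical in
/-- `K^A_z = {J ⊆ A | z ⪯₁ ⊕₁_{(x,y)∈J} x}`. -/
noncomputable def Kset {L1 L2 : Type*} (D1 : AnnDom L1) (A : Finset (L1 × L2))
    (z : L1) : Finset (Finset (L1 × L2)) :=
  A.powerset.filter (fun J => D1.le z (joinFst D1 J))

open Classical in
/-- `Ā(z) = ⊕₂_{J ∈ K^A_z} (⊗₂_{(x,y)∈J} y)` (empty join is `⊥₂`, empty
product is `⊤₂`). -/
noncomputable def Abar {L1 L2 : Type*} (D1 : AnnDom L1) (D2 : AnnDom L2)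
    (A : Finset (L1 × L2)) (z : L1) : L2 :=
  haveI : Std.Commutative D2.oplus := ⟨D2.oplus_comm⟩
  haveI : Std.Associative D2.oplus := ⟨D2.oplus_assoc⟩
  haveI : Std.Commutative D2.otimes := ⟨D2.otimes_comm⟩
  haveI : Std.Associative D2.otimes := ⟨D2.otimes_assoc⟩
  (Kset D1 A z).fold D2.oplus D2.bot (fun J => J.fold D2.otimes D2.top Prod.snd)

/-! ### Auxiliary lemmas -/

section Aux

variable {L : Type*} (D : AnnDom L)

lemma AnnDom.oplus_bot_right (x : L) : D.oplus x D.bot = x := by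
  rw [D.oplus_comm, D.bot_oplus]

/-- Absorption: `(x ⊗ y) ⊕ x = x`, a consequence of `⊤` annihilating `⊕`. -/
lemma AnnDom.absorb (x y : L) : D.oplus (D.otimes x y) x = x := by
  have h : D.otimes x D.top = x := by rw [D.otimes_comm, D.top_otimes]
  calc D.oplus (D.otimes x y) x
      = D.oplus (D.otimes x y) (D.otimes x D.top) := by rw [h]
    _ = D.otimes x (D.oplus y D.top) := (D.otimes_distrib x y D.top).symm
    _ = D.otimes x D.top := by rw [D.oplus_comm, D.top_oplus]
    _ = x := h

lemma fold_oplus_bot {α : Type*} [hc : Std.Commutative D.oplus]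
    [ha : Std.Associative D.oplus] (s : Finset α) (f : α → L)
    (hf : ∀ x ∈ s, f x = D.bot) :
    s.fold D.oplus D.bot f = D.bot := by
  classical
  rw [Finset.fold_congr hf, Finset.fold_const]
  · split <;> simp [D.oplus_idem, D.bot_oplus]
  · rw [D.oplus_idem, D.oplus_idem]

/-- Splitting a fold over a predicate. -/
lemma fold_oplus_split {α : Type*} [DecidableEq α] [hc : Std.Commutative D.oplus]
    [ha : Std.Associative D.oplus] (s : Finset α) (p : α → Prop) [DecidablePred p]
    (f : α → L) :
    s.fold D.oplus D.bot f =
      D.oplus ((s.filter p).fold D.oplus D.bot f)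
        ((s.filter (fun x => ¬ p x)).fold D.oplus D.bot f) := by
  have key := Finset.fold_union_inter (op := D.oplus) (f := f)
    (s₁ := s.filter p) (s₂ := s.filter (fun x => ¬ p x)) (b₁ := D.bot) (b₂ := D.bot)
  have hie : Finset.filter p s ∩ Finset.filter (fun x => ¬ p x) s = ∅ := by
    ext x
    simp only [Finset.mem_inter, Finset.mem_filter, Finset.notMem_empty, iff_false]
    tauto
  rw [Finset.filter_union_filter_not_eq p s, hie,
    Finset.fold_empty, D.oplus_bot_right] at key
  exact key

end Aux

open Classical
/-- If `(a,b) ∈ A` with `a = ⊥₁` or `b = ⊥₂`, removing `(a,b)` does not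
change the induced function. -/
theorem stmt19 {L1 L2 : Type*} (D1 : AnnDom L1) (D2 : AnnDom L2)
    (hL : D1.IsLattice) (A : Finset (L1 × L2)) (a : L1) (b : L2)
    (hab : (a, b) ∈ A) (hbot : a = D1.bot ∨ b = D2.bot) :
    ∀ z : L1, Abar D1 D2 A z = Abar D1 D2 (A.erase (a, b)) z := by
  haveI : Std.Commutative D1.oplus := ⟨D1.oplus_comm⟩
  haveI : Std.Associative D1.oplus := ⟨D1.oplus_assoc⟩
  haveI : Std.Commutative D2.oplus := ⟨D2.oplus_comm⟩
  haveI : Std.Associative D2.oplus := ⟨D2.oplus_assoc⟩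
  haveI : Std.Commutative D2.otimes := ⟨D2.otimes_comm⟩
  haveI : Std.Associative D2.otimes := ⟨D2.otimes_assoc⟩
  intro z
  set p : L1 × L2 := (a, b) with hp
  set prod : Finset (L1 × L2) → L2 :=
    fun J => J.fold D2.otimes D2.top Prod.snd with hprod
  -- the filtered-out part equals the K-set of the erased set
  have hK0 : (Kset D1 A z).filter (fun J => ¬ p ∈ J) = Kset D1 (A.erase p) z := by
    ext J
    simp only [Kset, Finset.mem_filter, Finset.mem_powerset, Finset.subset_erase]
    tauto
  have hsplit : Abar D1 D2 A z =
      D2.oplus (((Kset D1 A z).filter (fun J => p ∈ J)).fold D2.oplus D2.bot prod)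
        (Abar D1 D2 (A.erase p) z) := by
    show (Kset D1 A z).fold D2.oplus D2.bot prod = _
    rw [fold_oplus_split D2 (Kset D1 A z) (fun J => p ∈ J) prod, hK0]
    rfl
  rcases hbot with hbot | hbot
  · -- case a = ⊥₁ : pair up J and insert p J
    have hK1 : (Kset D1 A z).filter (fun J => p ∈ J)
        = (Kset D1 (A.erase p) z).image (insert p) := by
      ext J
      simp only [Kset, Finset.mem_filter, Finset.mem_powerset, Finset.mem_image,
        Finset.subset_erase]
      constructor
      · rintro ⟨⟨hJA, hle⟩, hpJ⟩
        refine ⟨J.erase p, ⟨⟨Finset.Subset.trans (Finset.erase_subset p J) hJA, Finset.notMem_erase p J⟩, ?_⟩,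
          Finset.insert_erase hpJ⟩
        have : joinFst D1 J = joinFst D1 (J.erase p) := by
          conv_lhs => rw [← Finset.insert_erase hpJ]
          show (insert p (J.erase p)).fold D1.oplus D1.bot Prod.fst = _
          rw [Finset.fold_insert (Finset.notMem_erase p J)]
          show D1.oplus p.1 _ = _
          rw [hp, hbot]
          exact D1.bot_oplus _
        rwa [this] at hle
      · rintro ⟨J', ⟨⟨hJ'A, hpJ'⟩, hle⟩, rfl⟩
        have hJoin : joinFst D1 (insert p J') = joinFst D1 J' := by
          show (insert p J').fold D1.oplus D1.bot Prod.fst = _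
          rw [Finset.fold_insert hpJ']
          show D1.oplus p.1 _ = _
          rw [hp, hbot]
          exact D1.bot_oplus _
        exact ⟨⟨Finset.insert_subset hab hJ'A, by rwa [hJoin]⟩, Finset.mem_insert_self p J'⟩
    have hinj : ∀ x ∈ Kset D1 (A.erase p) z, ∀ y ∈ Kset D1 (A.erase p) z,
        insert p x = insert p y → x = y := by
      intro x hx y hy hxy
      have hpx : p ∉ x := by
        simp only [Kset, Finset.mem_filter, Finset.mem_powerset, Finset.subset_erase] at hx
        exact hx.1.2
      have hpy : p ∉ y := by
        simp only [Kset, Finset.mem_filter, Finset.mem_powerset, Finset.subset_erase] at hy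
        exact hy.1.2
      rw [← Finset.erase_insert hpx, hxy, Finset.erase_insert hpy]
    have hfold1 : ((Kset D1 A z).filter (fun J => p ∈ J)).fold D2.oplus D2.bot prod
        = (Kset D1 (A.erase p) z).fold D2.oplus D2.bot
            (fun J => D2.otimes b (prod J)) := by
      rw [hK1, Finset.fold_image hinj]
      apply Finset.fold_congr
      intro J hJ
      have hpJ : p ∉ J := by
        simp only [Kset, Finset.mem_filter, Finset.mem_powerset, Finset.subset_erase] at hJ
        exact hJ.1.2
      show prod (insert p J) = _
      show (insert p J).fold D2.otimes D2.top Prod.snd = _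
      rw [Finset.fold_insert hpJ]
    rw [hsplit, hfold1]
    show D2.oplus _ ((Kset D1 (A.erase p) z).fold D2.oplus D2.bot prod) = _
    have hdistrib := Finset.fold_op_distrib (op := D2.oplus)
      (s := Kset D1 (A.erase p) z) (f := fun J => D2.otimes b (prod J)) (g := prod)
      (b₁ := D2.bot) (b₂ := D2.bot)
    rw [← hdistrib, D2.bot_oplus]
    have : ((Kset D1 (A.erase p) z).fold D2.oplus D2.bot
        (fun J => D2.oplus (D2.otimes b (prod J)) (prod J)))
        = (Kset D1 (A.erase p) z).fold D2.oplus D2.bot prod := by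
      apply Finset.fold_congr
      intro J _
      rw [D2.otimes_comm]
      exact D2.absorb (prod J) b
    rw [this]
    rfl
  · -- case b = ⊥₂ : subsets containing p have product ⊥₂
    have hbotfold : ((Kset D1 A z).filter (fun J => p ∈ J)).fold D2.oplus D2.bot prod
        = D2.bot := by
      apply fold_oplus_bot
      intro J hJ
      have hpJ : p ∈ J := (Finset.mem_filter.mp hJ).2
      show J.fold D2.otimes D2.top Prod.snd = D2.bot
      conv_lhs => rw [← Finset.insert_erase hpJ]
      rw [Finset.fold_insert (Finset.notMem_erase p J)]
      show D2.otimes p.2 _ = _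
      rw [hp, hbot]
      exact D2.bot_otimes _
    rw [hsplit, hbotfold, D2.bot_oplus]
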